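/- A rank-one free module L = H·e over a cocommutative Hopf algebra H, with pseudobracket [e * e] = α ⊗_H e for α ∈ H ⊗ H, is a Lie pseudoalgebra if and only if α satisfies: (i) α = −σ(α), where σ is the flip, and (ii) (α ⊗ 1)·(Δ ⊗ id)(α) = (1 ⊗ α)·(id ⊗ Δ)(α) − (σ ⊗ id)((1 ⊗ α)·(id ⊗ Δ)(α)). -/

import Mathlib

/-!
STATEMENT 8: A rank-one free module `L = H·e` over a cocommutative Hopf algebra `H`, with
pseudobracket `[e * e] = α ⊗_H e`, is a Lie pseudoalgebra iff
(i)  `α = −σ(α)`, and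
(ii) `(α ⊗ 1)(Δ ⊗ id)(α) = (1 ⊗ α)(id ⊗ Δ)(α) − (σ ⊗ id)((1 ⊗ α)(id ⊗ Δ)(α))`.

Since `L = H·e` is free of rank one, we use the canonical identifications
`(H ⊗ H) ⊗_H L ≅ H ⊗ H` and `H^{⊗3} ⊗_H L ≅ H^{⊗3}` (where `u ⊗_H e ↦ u`); by
`H`-bilinearity the pseudobracket is `[f·e * g·e] = ((f ⊗ g)·α) ⊗_H e`.  Under these
identifications, skew-commutativity and the Jacobi identity of the pseudobracket become
the predicates `RankOneSkew` and `RankOneJacobi` below (the compositions of polylinear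
maps in `H^{⊗3} ⊗_H L` being computed via the comultiplication, as in
Beilinson–Drinfeld).
-/

open TensorProduct

noncomputable section

variable (k H : Type*) [Field k] [Ring H] [HopfAlgebra k H]

/-- The flip `σ` of `H ⊗ H`. -/
def flipT : H ⊗[k] H →ₗ[k] H ⊗[k] H := (TensorProduct.comm k H H).toLinearMap

/-- `id ⊗ Δ : H ⊗ H → H ⊗ (H ⊗ H)`. -/
def idComul : H ⊗[k] H →ₗ[k] H ⊗[k] (H ⊗[k] H) :=
  LinearMap.lTensor H (Coalgebra.comul : H →ₗ[k] H ⊗[k] H)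

/-- `Δ ⊗ id : H ⊗ H → H ⊗ (H ⊗ H)` (reassociated). -/
def comulId : H ⊗[k] H →ₗ[k] H ⊗[k] (H ⊗[k] H) :=
  (TensorProduct.assoc k H H H).toLinearMap ∘ₗ
    LinearMap.rTensor H (Coalgebra.comul : H →ₗ[k] H ⊗[k] H)

/-- `u ↦ u ⊗ 1 : H ⊗ H → H^{⊗3}` (in the first two factors). -/
def emb12 : H ⊗[k] H →ₗ[k] H ⊗[k] (H ⊗[k] H) :=
  (TensorProduct.assoc k H H H).toLinearMap ∘ₗ
    ((TensorProduct.mk k (H ⊗[k] H) H).flip 1)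

/-- `σ ⊗ id` on `H^{⊗3}`: the transposition of the first two factors. -/
def swap12 : H ⊗[k] (H ⊗[k] H) →ₗ[k] H ⊗[k] (H ⊗[k] H) :=
  (TensorProduct.assoc k H H H).toLinearMap
    ∘ₗ LinearMap.rTensor H (TensorProduct.comm k H H).toLinearMap
    ∘ₗ (TensorProduct.assoc k H H H).symm.toLinearMap

/-- Skew-commutativity `[b*a] = −(σ ⊗_H id) [a*b]` of the rank-one pseudobracket
`[f·e * g·e] = ((f⊗g)α) ⊗_H e`, under the identification `(H⊗H) ⊗_H (H·e) ≅ H⊗H`. -/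
def RankOneSkew (α : H ⊗[k] H) : Prop :=
  ∀ f g : H, (g ⊗ₜ[k] f) * α = - flipT k H ((f ⊗ₜ[k] g) * α)

/-- The Jacobi identity
`[a*[b*c]] − ((σ⊗id) ⊗_H id) [b*[a*c]] = [[a*b]*c]` for `a = f·e`, `b = g·e`, `c = h·e`,
under the identification `H^{⊗3} ⊗_H (H·e) ≅ H^{⊗3}`; the compositions are computed via
Beilinson–Drinfeld's formulas:
`[a*[b*c]] = (1 ⊗ (g⊗h)α)·(id⊗Δ)((f⊗1)α)`, `[[a*b]*c] = ((f⊗g)α ⊗ 1)·(Δ⊗id)((1⊗h)α)`. -/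
def RankOneJacobi (α : H ⊗[k] H) : Prop :=
  ∀ f g h : H,
    ((1 : H) ⊗ₜ[k] ((g ⊗ₜ[k] h) * α)) * idComul k H ((f ⊗ₜ[k] (1 : H)) * α)
      - swap12 k H (((1 : H) ⊗ₜ[k] ((f ⊗ₜ[k] h) * α)) * idComul k H ((g ⊗ₜ[k] (1 : H)) * α))
    = emb12 k H ((f ⊗ₜ[k] g) * α) * comulId k H (((1 : H) ⊗ₜ[k] h) * α)


/-! ### Auxiliary lemmas -/

section Aux

lemma lmul_of_alg {A B : Type*} [Semiring A] [Semiring B] [Algebra k A] [Algebra k B]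
    (f : A →ₗ[k] B) (g : A →ₐ[k] B) (hfg : f = g.toLinearMap) (x y : A) :
    f (x * y) = f x * f y := by subst hfg; simp [map_mul]

lemma algAssoc_lin :
    (Algebra.TensorProduct.assoc k k k H H H).toLinearMap =
      (TensorProduct.assoc k H H H).toLinearMap :=
  TensorProduct.ext_threefold fun _ _ _ => by simp

lemma algAssoc_apply (x : (H ⊗[k] H) ⊗[k] H) :
    Algebra.TensorProduct.assoc k k k H H H x = TensorProduct.assoc k H H H x := by
  have := LinearMap.congr_fun (algAssoc_lin k H) x
  simpa using this

set_option synthInstance.maxHeartbeats 400000 in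
lemma algAssoc_symm_apply (x : H ⊗[k] (H ⊗[k] H)) :
    (Algebra.TensorProduct.assoc k k k H H H).symm x =
      (TensorProduct.assoc k H H H).symm x := by
  induction x using TensorProduct.induction_on with
  | zero => simp
  | tmul a y =>
    induction y using TensorProduct.induction_on with
    | zero => simp [TensorProduct.tmul_zero]
    | tmul b c => simp [Algebra.TensorProduct.assoc_symm_tmul]
    | add u v hu hv => simp [TensorProduct.tmul_add, map_add, hu, hv]
  | add u v hu hv => simp [map_add, hu, hv]

lemma flipT_hom :
    flipT k H = (Algebra.TensorProduct.comm k H H).toAlgHom.toLinearMap :=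
  TensorProduct.ext' fun a b => by simp [flipT]

lemma flipT_mul (x y : H ⊗[k] H) :
    flipT k H (x * y) = flipT k H x * flipT k H y :=
  lmul_of_alg k _ _ (flipT_hom k H) x y

lemma idComul_hom :
    idComul k H =
      (Algebra.TensorProduct.map (AlgHom.id k H) (Bialgebra.comulAlgHom k H)).toLinearMap :=
  TensorProduct.ext' fun a b => by simp [idComul]

lemma idComul_mul (x y : H ⊗[k] H) :
    idComul k H (x * y) = idComul k H x * idComul k H y :=
  lmul_of_alg k _ _ (idComul_hom k H) x y

lemma comulId_hom :
    comulId k H =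
      ((Algebra.TensorProduct.assoc k k k H H H).toAlgHom.comp
        (Algebra.TensorProduct.map (Bialgebra.comulAlgHom k H) (AlgHom.id k H))).toLinearMap :=
  TensorProduct.ext' fun a b => by
    simp [comulId, algAssoc_apply, TensorProduct.AlgebraTensorModule.assoc_eq]

lemma comulId_mul (x y : H ⊗[k] H) :
    comulId k H (x * y) = comulId k H x * comulId k H y :=
  lmul_of_alg k _ _ (comulId_hom k H) x y

lemma emb12_hom :
    emb12 k H =
      ((Algebra.TensorProduct.assoc k k k H H H).toAlgHom.comp
        (Algebra.TensorProduct.includeLeft (S := k))).toLinearMap :=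
  TensorProduct.ext' fun a b => by
    simp [emb12, algAssoc_apply, Algebra.TensorProduct.one_def]

lemma emb12_mul (x y : H ⊗[k] H) :
    emb12 k H (x * y) = emb12 k H x * emb12 k H y :=
  lmul_of_alg k _ _ (emb12_hom k H) x y

lemma swap12_hom :
    swap12 k H =
      ((Algebra.TensorProduct.assoc k k k H H H).toAlgHom.comp
        ((Algebra.TensorProduct.map (Algebra.TensorProduct.comm k H H).toAlgHom
            (AlgHom.id k H)).comp
          (Algebra.TensorProduct.assoc k k k H H H).symm.toAlgHom)).toLinearMap :=
  TensorProduct.ext' fun a y => by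
    induction y using TensorProduct.induction_on with
    | zero => rw [TensorProduct.tmul_zero, map_zero, map_zero]
    | tmul b c =>
      simp [swap12, algAssoc_apply, algAssoc_symm_apply,
        Algebra.TensorProduct.assoc_symm_tmul]
    | add u v hu hv => simp_all [TensorProduct.tmul_add, map_add]

lemma swap12_mul (x y : H ⊗[k] (H ⊗[k] H)) :
    swap12 k H (x * y) = swap12 k H x * swap12 k H y :=
  lmul_of_alg k _ _ (swap12_hom k H) x y

lemma flipT_tmul (a b : H) : flipT k H (a ⊗ₜ[k] b) = b ⊗ₜ[k] a := by simp [flipT]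

lemma idComul_tmul_one (f : H) :
    idComul k H (f ⊗ₜ[k] (1 : H)) = f ⊗ₜ[k] (1 : H ⊗[k] H) := by
  simp [idComul, Bialgebra.comul_one]

lemma comulId_one_tmul (h : H) :
    comulId k H ((1 : H) ⊗ₜ[k] h) = (1 : H) ⊗ₜ[k] ((1 : H) ⊗ₜ[k] h) := by
  simp [comulId, Bialgebra.comul_one, Algebra.TensorProduct.one_def]

lemma emb12_tmul (f g : H) :
    emb12 k H (f ⊗ₜ[k] g) = f ⊗ₜ[k] (g ⊗ₜ[k] (1 : H)) := by
  simp [emb12]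

lemma swap12_tmul (a b c : H) :
    swap12 k H (a ⊗ₜ[k] (b ⊗ₜ[k] c)) = b ⊗ₜ[k] (a ⊗ₜ[k] c) := by
  simp [swap12]

lemma one_tmul_mul_tmul_one (f : H) (x : H ⊗[k] H) :
    ((1 : H) ⊗ₜ[k] x) * (f ⊗ₜ[k] (1 : H ⊗[k] H)) = f ⊗ₜ[k] x := by
  rw [Algebra.TensorProduct.tmul_mul_tmul, one_mul, mul_one]

lemma tmul_mul_one_tmul (f : H) (x : H ⊗[k] H) :
    (f ⊗ₜ[k] (1 : H ⊗[k] H)) * ((1 : H) ⊗ₜ[k] x) = f ⊗ₜ[k] x := by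
  rw [Algebra.TensorProduct.tmul_mul_tmul, one_mul, mul_one]

lemma one_tmul_mul (x y : H ⊗[k] H) :
    ((1 : H) ⊗ₜ[k] x) * ((1 : H) ⊗ₜ[k] y) = (1 : H) ⊗ₜ[k] (x * y) := by
  rw [Algebra.TensorProduct.tmul_mul_tmul, one_mul]

/-- `emb12 α` (whose third tensor factor is `1`) commutes with `1 ⊗ 1 ⊗ h`. -/
lemma emb12_comm_third (α : H ⊗[k] H) (h : H) :
    emb12 k H α * ((1 : H) ⊗ₜ[k] ((1 : H) ⊗ₜ[k] h)) =
      ((1 : H) ⊗ₜ[k] ((1 : H) ⊗ₜ[k] h)) * emb12 k H α := by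
  induction α using TensorProduct.induction_on with
  | zero => simp
  | tmul a b =>
    rw [emb12_tmul]
    simp [Algebra.TensorProduct.tmul_mul_tmul]
  | add u v hu hv => rw [map_add, add_mul, mul_add, hu, hv]

/-- Term `[a*[b*c]]` of the Jacobi identity, in normal form. -/
lemma termA (α : H ⊗[k] H) (f g h : H) :
    ((1 : H) ⊗ₜ[k] ((g ⊗ₜ[k] h) * α)) * idComul k H ((f ⊗ₜ[k] (1 : H)) * α) =
      (f ⊗ₜ[k] (g ⊗ₜ[k] h)) * (((1 : H) ⊗ₜ[k] α) * idComul k H α) := by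
  rw [idComul_mul, idComul_tmul_one]
  calc ((1 : H) ⊗ₜ[k] ((g ⊗ₜ[k] h) * α)) * ((f ⊗ₜ[k] (1 : H ⊗[k] H)) * idComul k H α)
      = (((1 : H) ⊗ₜ[k] ((g ⊗ₜ[k] h) * α)) * (f ⊗ₜ[k] (1 : H ⊗[k] H))) * idComul k H α :=
        (mul_assoc _ _ _).symm
    _ = (f ⊗ₜ[k] ((g ⊗ₜ[k] h) * α)) * idComul k H α := by rw [one_tmul_mul_tmul_one]
    _ = ((f ⊗ₜ[k] (g ⊗ₜ[k] h)) * ((1 : H) ⊗ₜ[k] α)) * idComul k H α := by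
        rw [Algebra.TensorProduct.tmul_mul_tmul, mul_one]
    _ = (f ⊗ₜ[k] (g ⊗ₜ[k] h)) * (((1 : H) ⊗ₜ[k] α) * idComul k H α) := mul_assoc _ _ _

/-- Right-hand side `[[a*b]*c]` of the Jacobi identity, in normal form. -/
lemma termC (α : H ⊗[k] H) (f g h : H) :
    emb12 k H ((f ⊗ₜ[k] g) * α) * comulId k H (((1 : H) ⊗ₜ[k] h) * α) =
      (f ⊗ₜ[k] (g ⊗ₜ[k] h)) * (emb12 k H α * comulId k H α) := by
  rw [emb12_mul, comulId_mul, emb12_tmul, comulId_one_tmul,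
    mul_assoc, ← mul_assoc (emb12 k H α), emb12_comm_third, mul_assoc, ← mul_assoc,
    ← mul_assoc, Algebra.TensorProduct.tmul_mul_tmul,
    Algebra.TensorProduct.tmul_mul_tmul, one_mul, mul_one, mul_one, mul_assoc]

end Aux

/-- `L = H·e` with `[e*e] = α ⊗_H e` is a Lie pseudoalgebra iff
`α = −σ(α)` and `(α⊗1)(Δ⊗id)(α) = (1⊗α)(id⊗Δ)(α) − (σ⊗id)((1⊗α)(id⊗Δ)(α))`. -/
theorem rank_one_lie_pseudoalgebra_iff
    (hcoc : ∀ a : H,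
      (TensorProduct.comm k H H) (Coalgebra.comul (R := k) a) = Coalgebra.comul (R := k) a)
    (α : H ⊗[k] H) :
    (RankOneSkew k H α ∧ RankOneJacobi k H α) ↔
      (α = - flipT k H α ∧
        emb12 k H α * comulId k H α =
          ((1 : H) ⊗ₜ[k] α) * idComul k H α
            - swap12 k H (((1 : H) ⊗ₜ[k] α) * idComul k H α)) := by
  constructor
  · rintro ⟨hs, hj⟩
    constructor
    · have := hs 1 1
      rwa [← Algebra.TensorProduct.one_def, one_mul] at this
    · have := hj 1 1 1
      rw [← Algebra.TensorProduct.one_def, one_mul] at this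
      exact this.symm
  · rintro ⟨h1, h2⟩
    constructor
    · intro f g
      rw [flipT_mul, flipT_tmul, ← mul_neg, ← h1]
    · intro f g h
      rw [termA, termA, swap12_mul, swap12_tmul, termC, h2, mul_sub]

end
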